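/- Let Z be a commutative ring and z_1, z_2, … elements of a commutative Z-algebra such that the monomials in the z_i are Z-linearly independent (the z_i are algebraically independent over Z). If c(u) = 1 + Σ_{r≥1} c^{(r)} u^{-r} is a series whose coefficients c^{(r)} are polynomials in the z_i with the property that the degree-filtration symbols of c^{(rp)} equal z_r^p - z_{rp-p+1} (for all r ≥ 1, in a graded polynomial ring k[z_1, z_2, …] with deg z_r = r-1 over a field of characteristic p), then the elements {c^{(rp)} : r ≥ 1} are algebraically independent over k. -/

import Mathlib

open MvPolynomial

namespace Stmt19Aux

variable {σ k : Type*} [CommRing k]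

lemma wtd_mul_le (w : σ → ℕ) (f g : MvPolynomial σ k) :
    weightedTotalDegree w (f * g) ≤ weightedTotalDegree w f + weightedTotalDegree w g := by
  classical
  apply Finset.sup_le
  intro d hd
  obtain ⟨a, ha, b, hb, rfl⟩ := Finset.mem_add.mp (MvPolynomial.support_mul f g hd)
  rw [map_add]
  exact add_le_add (le_weightedTotalDegree w ha) (le_weightedTotalDegree w hb)

lemma wtd_add_le (w : σ → ℕ) (f g : MvPolynomial σ k) :
    weightedTotalDegree w (f + g) ≤ max (weightedTotalDegree w f) (weightedTotalDegree w g) := by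
  classical
  apply Finset.sup_le
  intro d hd
  rcases Finset.mem_union.mp (MvPolynomial.support_add hd) with h | h
  · exact le_max_of_le_left (le_weightedTotalDegree w h)
  · exact le_max_of_le_right (le_weightedTotalDegree w h)

lemma iswh_wtd_le {w : σ → ℕ} {f : MvPolynomial σ k} {n : ℕ}
    (hf : IsWeightedHomogeneous w f n) : weightedTotalDegree w f ≤ n :=
  Finset.sup_le fun _ hd => le_of_eq (hf (MvPolynomial.mem_support_iff.mp hd))

lemma iswh_pow {w : σ → ℕ} {f : MvPolynomial σ k} {n : ℕ}
    (hf : IsWeightedHomogeneous w f n) (e : ℕ) :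
    IsWeightedHomogeneous w (f ^ e) (e * n) := by
  induction e with
  | zero => simpa using isWeightedHomogeneous_one k w
  | succ e ih =>
      rw [pow_succ, Nat.succ_mul]
      exact ih.mul hf

/-- `f` agrees with the `w`-homogeneous (degree-`n`) polynomial `h` up to
terms of weighted degree `< n`. -/
def Approx (w : σ → ℕ) (n : ℕ) (f h : MvPolynomial σ k) : Prop :=
  IsWeightedHomogeneous w h n ∧ (f = h ∨ weightedTotalDegree w (f - h) < n)

lemma Approx.wtd_le {w : σ → ℕ} {n : ℕ} {f h : MvPolynomial σ k}
    (ha : Approx w n f h) : weightedTotalDegree w f ≤ n := by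
  rcases ha.2 with rfl | hlt
  · exact iswh_wtd_le ha.1
  · have hfe : f = h + (f - h) := by ring
    calc weightedTotalDegree w f = weightedTotalDegree w (h + (f - h)) := by rw [← hfe]
      _ ≤ max (weightedTotalDegree w h) (weightedTotalDegree w (f - h)) := wtd_add_le w _ _
      _ ≤ n := max_le (iswh_wtd_le ha.1) hlt.le

lemma Approx.mul {w : σ → ℕ} {m n : ℕ} {f₁ h₁ f₂ h₂ : MvPolynomial σ k}
    (a₁ : Approx w m f₁ h₁) (a₂ : Approx w n f₂ h₂) :
    Approx w (m + n) (f₁ * f₂) (h₁ * h₂) := by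
  refine ⟨a₁.1.mul a₂.1, ?_⟩
  rcases a₁.2 with e₁ | hlt₁ <;> rcases a₂.2 with e₂ | hlt₂
  · exact Or.inl (by rw [e₁, e₂])
  · right
    have hkey : f₁ * f₂ - h₁ * h₂ = h₁ * (f₂ - h₂) := by rw [e₁]; ring
    rw [hkey]
    calc weightedTotalDegree w (h₁ * (f₂ - h₂))
        ≤ weightedTotalDegree w h₁ + weightedTotalDegree w (f₂ - h₂) := wtd_mul_le w _ _
      _ < m + n := add_lt_add_of_le_of_lt (iswh_wtd_le a₁.1) hlt₂
  · right
    have hkey : f₁ * f₂ - h₁ * h₂ = (f₁ - h₁) * f₂ := by rw [e₂]; ring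
    rw [hkey]
    calc weightedTotalDegree w ((f₁ - h₁) * f₂)
        ≤ weightedTotalDegree w (f₁ - h₁) + weightedTotalDegree w f₂ := wtd_mul_le w _ _
      _ < m + n := add_lt_add_of_lt_of_le hlt₁ (Approx.wtd_le a₂)
  · right
    have hkey : f₁ * f₂ - h₁ * h₂ = (f₁ - h₁) * f₂ + h₁ * (f₂ - h₂) := by ring
    rw [hkey]
    refine lt_of_le_of_lt (wtd_add_le w _ _) (max_lt ?_ ?_)
    · calc weightedTotalDegree w ((f₁ - h₁) * f₂)
          ≤ weightedTotalDegree w (f₁ - h₁) + weightedTotalDegree w f₂ := wtd_mul_le w _ _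
        _ < m + n := add_lt_add_of_lt_of_le hlt₁ (Approx.wtd_le a₂)
    · calc weightedTotalDegree w (h₁ * (f₂ - h₂))
          ≤ weightedTotalDegree w h₁ + weightedTotalDegree w (f₂ - h₂) := wtd_mul_le w _ _
        _ < m + n := add_lt_add_of_le_of_lt (iswh_wtd_le a₁.1) hlt₂

lemma Approx.pow {w : σ → ℕ} {n : ℕ} {f h : MvPolynomial σ k}
    (a : Approx w n f h) (e : ℕ) : Approx w (e * n) (f ^ e) (h ^ e) := by
  induction e with
  | zero => exact ⟨by simpa using isWeightedHomogeneous_one k w, Or.inl (by simp)⟩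
  | succ e ih =>
      have := ih.mul a
      rw [← pow_succ, ← pow_succ, ← Nat.succ_mul] at this
      exact this

lemma Approx.C (w : σ → ℕ) (b : k) :
    Approx w 0 (MvPolynomial.C b : MvPolynomial σ k) (MvPolynomial.C b) :=
  ⟨isWeightedHomogeneous_C w b, Or.inl rfl⟩

lemma Approx.prod {w : σ → ℕ} {ι : Type*} (s : Finset ι) (f h : ι → MvPolynomial σ k)
    (n : ι → ℕ) (ha : ∀ i ∈ s, Approx w (n i) (f i) (h i)) :
    Approx w (∑ i ∈ s, n i) (∏ i ∈ s, f i) (∏ i ∈ s, h i) := by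
  classical
  induction s using Finset.induction with
  | empty => exact ⟨by simpa using isWeightedHomogeneous_one k w, Or.inl (by simp)⟩
  | insert i s' hi ih =>
      rw [Finset.prod_insert hi, Finset.prod_insert hi, Finset.sum_insert hi]
      exact (ha i (Finset.mem_insert_self _ _)).mul
        (ih fun j hj => ha j (Finset.mem_insert_of_mem hj))

lemma approx_monomial {w : σ → ℕ} {ι : Type*} (v : ι → ℕ) (c t : ι → MvPolynomial σ k)
    (ha : ∀ i, Approx w (v i) (c i) (t i)) (a : ι →₀ ℕ) (b : k) :
    Approx w (Finsupp.weight v a) (aeval c (monomial a b)) (aeval t (monomial a b)) := by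
  rw [aeval_monomial, aeval_monomial, Finsupp.weight_apply]
  have := (Approx.C w b).mul (Approx.prod a.support (fun i => c i ^ a i)
    (fun i => t i ^ a i) (fun i => a i * v i) (fun i _ => (ha i).pow (a i)))
  simpa [Finsupp.prod, Finsupp.sum, algebraMap_eq, smul_eq_mul] using this

lemma key {ι : Type*} (w : σ → ℕ) (v : ι → ℕ) (t c : ι → MvPolynomial σ k)
    (ha : ∀ i, Approx w (v i) (c i) (t i))
    (htind : AlgebraicIndependent k t) : AlgebraicIndependent k c := by
  classical
  rw [algebraicIndependent_iff] at htind ⊢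
  intro P hP
  by_contra hP0
  set d := weightedTotalDegree v P with hd
  have main : weightedHomogeneousComponent w d (aeval c P)
      = aeval t (weightedHomogeneousComponent v d P) := by
    conv_lhs => rw [← P.support_sum_monomial_coeff]
    rw [map_sum, map_sum, weightedHomogeneousComponent_apply, map_sum, Finset.sum_filter]
    apply Finset.sum_congr rfl
    intro a haP
    have hA := approx_monomial v c t ha a (coeff a P)
    have hle : Finsupp.weight v a ≤ d := le_weightedTotalDegree v haP
    have step1 : weightedHomogeneousComponent w d (aeval c (monomial a (coeff a P)))
        = weightedHomogeneousComponent w d (aeval t (monomial a (coeff a P))) := by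
      rcases hA.2 with e | hlt
      · rw [e]
      · have hsplit : aeval c (monomial a (coeff a P))
            = aeval t (monomial a (coeff a P))
              + (aeval c (monomial a (coeff a P)) - aeval t (monomial a (coeff a P))) := by
          ring
        rw [hsplit, map_add,
          weightedHomogeneousComponent_eq_zero d _ (lt_of_lt_of_le hlt hle), add_zero]
    rw [step1]
    by_cases hwa : Finsupp.weight v a = d
    · rw [if_pos hwa]
      have := hA.1.weightedHomogeneousComponent_same
      rwa [hwa] at this
    · rw [if_neg hwa]
      exact hA.1.weightedHomogeneousComponent_ne d fun h => hwa h.symm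
  have h0 : aeval t (weightedHomogeneousComponent v d P) = 0 := by
    rw [← main, hP, map_zero]
  have hcomp0 := htind _ h0
  obtain ⟨a, haP, hsup⟩ :=
    Finset.exists_mem_eq_sup P.support (MvPolynomial.support_nonempty.mpr hP0)
      (fun s => Finsupp.weight v s)
  have hco : coeff a (weightedHomogeneousComponent v d P) = coeff a P := by
    rw [coeff_weightedHomogeneousComponent,
      if_pos (show (Finsupp.weight v) a = d from hsup.symm)]
  rw [hcomp0, coeff_zero] at hco
  exact (MvPolynomial.mem_support_iff.mp haP) hco.symm

lemma coeff_expand_smul (p : ℕ) (hp : 0 < p) (f : MvPolynomial σ k) (a : σ →₀ ℕ) :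
    coeff (p • a) (expand p f) = coeff a f := by
  classical
  have hmono : ∀ (b : σ →₀ ℕ) (r : k),
      expand p (monomial b r) = monomial (p • b) r := by
    intro b r
    rw [expand_monomial, monomial_eq, Finsupp.prod]
  have hinj : Function.Injective (fun b : σ →₀ ℕ => p • b) := by
    intro b₁ b₂ hb
    ext i
    have := congrArg (fun f : σ →₀ ℕ => f i) hb
    simp only [Finsupp.smul_apply, smul_eq_mul] at this
    exact Nat.eq_of_mul_eq_mul_left hp this
  conv_lhs => rw [← f.support_sum_monomial_coeff]
  rw [map_sum]
  simp only [hmono]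
  rw [coeff_sum]
  rw [Finset.sum_eq_single a]
  · rw [coeff_monomial, if_pos rfl]
  · intro b hb hba
    rw [coeff_monomial, if_neg (fun h => hba (hinj h))]
  · intro haf
    rw [coeff_monomial, if_pos rfl]
    exact (MvPolynomial.notMem_support_iff.mp haf)

lemma expand_inj (p : ℕ) (hp : 0 < p) :
    Function.Injective (expand p : MvPolynomial σ k →ₐ[k] MvPolynomial σ k) := by
  intro f g hfg
  ext a
  rw [← coeff_expand_smul p hp f a, ← coeff_expand_smul p hp g a, hfg]

lemma algInd_X_pow (p : ℕ) (hp : 0 < p) :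
    AlgebraicIndependent k (fun i : σ => (X i : MvPolynomial σ k) ^ p) := by
  have heq : (aeval fun i : σ => (X i : MvPolynomial σ k) ^ p)
      = (expand p : MvPolynomial σ k →ₐ[k] MvPolynomial σ k) := by
    apply MvPolynomial.algHom_ext
    intro i
    rw [aeval_X, expand_X]
  show Function.Injective (aeval fun i : σ => (X i : MvPolynomial σ k) ^ p)
  rw [heq]
  exact expand_inj p hp

lemma wtd_X [Nontrivial k] (w : σ → ℕ) (i : σ) :
    weightedTotalDegree w (X i : MvPolynomial σ k) = w i := by
  rw [weightedTotalDegree, support_X, Finset.sup_singleton]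
  simp [Finsupp.weight_apply, Finsupp.sum_single_index]

end Stmt19Aux

open Stmt19Aux in
theorem stmt19 {k : Type*} [Field k] (p : ℕ) [Fact p.Prime] [CharP k p]
    (hp : 2 < p) (c : ℕ+ → MvPolynomial ℕ+ k)
    (hc : ∀ r : ℕ+, ∃ q : MvPolynomial ℕ+ k,
      c r = MvPolynomial.X r ^ p
          - MvPolynomial.X (⟨(r : ℕ) * p - p + 1, Nat.succ_pos _⟩ : ℕ+) + q ∧
        (q = 0 ∨
          MvPolynomial.weightedTotalDegree (fun m : ℕ+ => (m : ℕ) - 1) q <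
            (r : ℕ) * p - p)) :
    AlgebraicIndependent k c := by
  classical
  have hppos : 0 < p := by omega
  set w : ℕ+ → ℕ := fun m => (m : ℕ) - 1 with hw
  set g : ℕ+ → ℕ+ := fun r => ⟨(r : ℕ) * p - p + 1, Nat.succ_pos _⟩ with hg
  set t : ℕ+ → MvPolynomial ℕ+ k := fun r => X r ^ p - X (g r) with ht
  -- auxiliary arithmetic
  have harith : ∀ r : ℕ+, p * ((r : ℕ) - 1) = (r : ℕ) * p - p := by
    intro r
    obtain ⟨s, hs⟩ : ∃ s, (r : ℕ) = s + 1 := ⟨(r : ℕ) - 1, by have := r.pos; omega⟩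
    rw [hs, Nat.add_sub_cancel, Nat.add_mul, one_mul, Nat.add_sub_cancel, Nat.mul_comm]
  have h1 : AlgebraicIndependent k (fun r : ℕ+ => (X r : MvPolynomial ℕ+ k) ^ p) :=
    algInd_X_pow p hppos
  have h2 : AlgebraicIndependent k t := by
    apply key (fun m : ℕ+ => (m : ℕ)) (fun r : ℕ+ => (r : ℕ) * p)
      (fun r : ℕ+ => (X r : MvPolynomial ℕ+ k) ^ p) t ?_ h1
    intro r
    constructor
    · have := iswh_pow (isWeightedHomogeneous_X k (fun m : ℕ+ => (m : ℕ)) r) p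
      rwa [Nat.mul_comm] at this
    · right
      have hdiff : t r - X r ^ p = -(X (g r) : MvPolynomial ℕ+ k) := by
        rw [ht]; ring
      rw [hdiff]
      have hneg : weightedTotalDegree (fun m : ℕ+ => (m : ℕ))
          (-(X (g r)) : MvPolynomial ℕ+ k)
          = weightedTotalDegree (fun m : ℕ+ => (m : ℕ)) (X (g r) : MvPolynomial ℕ+ k) := by
        rw [weightedTotalDegree, weightedTotalDegree, support_neg]
      rw [hneg, wtd_X]
      show ((g r : ℕ+) : ℕ) < (r : ℕ) * p
      have hgr : ((g r : ℕ+) : ℕ) = (r : ℕ) * p - p + 1 := rfl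
      have hrp : p ≤ (r : ℕ) * p := Nat.le_mul_of_pos_left p r.pos
      omega
  apply key w (fun r : ℕ+ => (r : ℕ) * p - p) t c ?_ h2
  intro r
  obtain ⟨q, hq1, hq2⟩ := hc r
  have hct : c r - t r = q := by rw [hq1, ht]; exact add_sub_cancel_left _ _
  constructor
  · have hx : IsWeightedHomogeneous w ((X r : MvPolynomial ℕ+ k) ^ p) ((r : ℕ) * p - p) := by
      have := iswh_pow (isWeightedHomogeneous_X k w r) p
      rwa [hw, harith r] at this
    have hgx : IsWeightedHomogeneous w (X (g r) : MvPolynomial ℕ+ k) ((r : ℕ) * p - p) := by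
      have := isWeightedHomogeneous_X k w (g r)
      have hgr : w (g r) = (r : ℕ) * p - p := by
        show ((r : ℕ) * p - p + 1) - 1 = (r : ℕ) * p - p
        omega
      rwa [hgr] at this
    rw [ht]
    have := (mem_weightedHomogeneousSubmodule k w _ _).mpr hx
    have h2 := (mem_weightedHomogeneousSubmodule k w _ _).mpr hgx
    exact (mem_weightedHomogeneousSubmodule k w _ _).mp
      ((weightedHomogeneousSubmodule k w ((r : ℕ) * p - p)).sub_mem this h2)
  · rcases hq2 with rfl | hlt
    · left
      rw [hq1, ht]
      exact add_zero _
    · right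
      rw [hct]
      exact hlt
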